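/- Suppose τ̃ dominates τ (i.e. τ(α) ≤ τ(β) implies τ̃(α) ≤ τ̃(β) for all α, β ∈ C). Let λ : {1,…,m} → C and α = λ({1,…,m}). Then S({1,…,m},≤,λ,τ̃,τ) = (−1)^{m−1} if τ(λ({1,…,i})) > τ(λ({i+1,…,m})) for all i = 1,…,m−1 and τ̃(λ(i)) = τ̃(α) for all i = 1,…,m, and S({1,…,m},≤,λ,τ̃,τ) = 0 otherwise. -/

import Mathlib

open scoped Classical
open Finset Function

/-- A weak stability function on `C ⊆ A` with values in a total order:
whenever `α, γ ∈ C` (so that `β = α + γ`), either `τ α ≤ τ β ≤ τ γ` or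
`τ α ≥ τ β ≥ τ γ`. -/
def WeakStability {A T : Type*} [AddCommGroup A] [LinearOrder T] (C : Set A) (τ : A → T) : Prop :=
  ∀ α γ : A, α ∈ C → γ ∈ C →
    (τ α ≤ τ (α + γ) ∧ τ (α + γ) ≤ τ γ) ∨ (τ γ ≤ τ (α + γ) ∧ τ (α + γ) ≤ τ α)

/-- Sum `κ 0 + ⋯ + κ i`. -/
def lowSum {A : Type*} [AddCommGroup A] (κ : ℕ → A) (i : ℕ) : A :=
  ∑ j ∈ Finset.range (i + 1), κ j

/-- Sum `κ (i+1) + ⋯ + κ (n-1)`. -/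
def highSum {A : Type*} [AddCommGroup A] (κ : ℕ → A) (i n : ℕ) : A :=
  ∑ j ∈ Finset.Ico (i + 1) n, κ j

/-- Condition (a) at position `i` in the definition of the coefficient `S`. -/
def SCondA {A T T' : Type*} [AddCommGroup A] [LinearOrder T] [LinearOrder T']
    (τ : A → T) (τ' : A → T') (n : ℕ) (κ : ℕ → A) (i : ℕ) : Prop :=
  τ (κ i) ≤ τ (κ (i + 1)) ∧ τ' (highSum κ i n) < τ' (lowSum κ i)

/-- Condition (b) at position `i` in the definition of the coefficient `S`. -/
def SCondB {A T T' : Type*} [AddCommGroup A] [LinearOrder T] [LinearOrder T']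
    (τ : A → T) (τ' : A → T') (n : ℕ) (κ : ℕ → A) (i : ℕ) : Prop :=
  τ (κ (i + 1)) < τ (κ i) ∧ τ' (lowSum κ i) ≤ τ' (highSum κ i n)

/-- The transformation coefficient `S({1,…,n},≤,κ,τ,τ')` for the sequence
`κ 0, …, κ (n-1)` (indexed from `0`). -/
noncomputable def Scoeff {A T T' : Type*} [AddCommGroup A] [LinearOrder T] [LinearOrder T']
    (τ : A → T) (τ' : A → T') (n : ℕ) (κ : ℕ → A) : ℤ :=
  if ∀ i ∈ Finset.range (n - 1), SCondA τ τ' n κ i ∨ SCondB τ τ' n κ i then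
    (-1) ^ ((Finset.range (n - 1)).filter (SCondA τ τ' n κ)).card
  else 0

/-- The sequence `κ 0, …, κ (n-1)` is `τ`-reversing. -/
def Reversing {A T : Type*} [AddCommGroup A] [LinearOrder T] (τ : A → T) (n : ℕ) (κ : ℕ → A) :
    Prop :=
  ∀ i, i + 1 < n → τ (κ (i + 1)) < τ (κ i)

/-- The sequence `κ 0, …, κ (n-1)` is `τ`-semistable. -/
def Semistable {A T : Type*} [AddCommGroup A] [LinearOrder T] (τ : A → T) (n : ℕ) (κ : ℕ → A) :
    Prop :=
  ∀ i, i + 1 < n → τ (lowSum κ i) ≤ τ (highSum κ i n)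

/-- Extend a `Fin n`-indexed sequence to `ℕ` by zero. -/
def toSeq {A : Type*} [AddCommGroup A] {n : ℕ} (κ : Fin n → A) : ℕ → A :=
  fun j => if h : j < n then κ ⟨j, h⟩ else 0

/-- The subsequence of `κ` on a subset `s ⊆ Fin n`, enumerated in increasing order. -/
noncomputable def fiberSeq {A : Type*} [AddCommGroup A] {n : ℕ} (κ : Fin n → A)
    (s : Finset (Fin n)) : ℕ → A :=
  fun j => if h : j < s.card then κ (s.orderIsoOfFin rfl ⟨j, h⟩).1 else 0

/-- The transformation coefficient `U({1,…,n},≤,κ,τ,τ')`. -/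
noncomputable def Ucoeff {A T T' : Type*} [AddCommGroup A] [LinearOrder T] [LinearOrder T']
    (τ : A → T) (τ' : A → T') (n : ℕ) (κ : ℕ → A) : ℚ :=
  ∑ l ∈ Finset.Icc 1 n, ∑ m ∈ Finset.Icc l n,
    ∑ p ∈ Finset.univ.filter
        (fun p : (Fin n → Fin m) × (Fin m → Fin l) =>
          Surjective p.1 ∧ Monotone p.1 ∧ Surjective p.2 ∧ Monotone p.2),
      (if (∀ i : Fin n, τ (κ i.1) =
              τ (∑ j ∈ Finset.univ.filter (fun j : Fin n => p.1 j = p.1 i), κ j.1)) ∧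
          (∀ a : Fin l,
              τ' (∑ j ∈ Finset.univ.filter (fun j : Fin n => p.2 (p.1 j) = a), κ j.1) =
              τ' (∑ j ∈ Finset.range n, κ j)) then
        (∏ a : Fin l,
          ((Scoeff τ τ' (Finset.univ.filter (fun b : Fin m => p.2 b = a)).card
            (fiberSeq
              (fun b : Fin m => ∑ j ∈ Finset.univ.filter (fun j : Fin n => p.1 j = b), κ j.1)
              (Finset.univ.filter (fun b : Fin m => p.2 b = a)))) : ℚ))
        * ((-1 : ℚ) ^ (l - 1) / (l : ℚ))
        * ∏ b : Fin m,
            ((1 : ℚ) / (Nat.factorial (Finset.univ.filter (fun j : Fin n => p.1 j = b)).card : ℚ))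
      else 0)

section StabAux

variable {A T T' : Type*} [AddCommGroup A] [LinearOrder T] [LinearOrder T']

lemma lowSum_zero' (κ : ℕ → A) : lowSum κ 0 = κ 0 := by simp [lowSum]

lemma lowSum_succ' (κ : ℕ → A) (i : ℕ) : lowSum κ (i + 1) = lowSum κ i + κ (i + 1) :=
  Finset.sum_range_succ κ (i + 1)

lemma highSum_succ' (κ : ℕ → A) {i n : ℕ} (h : i + 1 < n) :
    highSum κ i n = κ (i + 1) + highSum κ (i + 1) n := by
  unfold highSum
  rw [Finset.sum_eq_sum_Ico_succ_bot h]

lemma highSum_last' (κ : ℕ → A) {i n : ℕ} (h : i + 2 = n) : highSum κ i n = κ (i + 1) := by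
  subst h; simp [highSum]

lemma low_add_high' (κ : ℕ → A) {i n : ℕ} (h : i < n) :
    lowSum κ i + highSum κ i n = ∑ j ∈ Finset.range n, κ j := by
  unfold lowSum highSum
  rw [Finset.range_eq_Ico]
  rw [Finset.range_eq_Ico]; exact Finset.sum_Ico_consecutive κ (m := 0) (n := i + 1) (k := n) (by omega) (by omega)

lemma auxKey (C : Set A) (hC : ∀ a b : A, a ∈ C → b ∈ C → a + b ∈ C)
    (τ : A → T) (τt : A → T') (hτ : WeakStability C τ) (hτt : WeakStability C τt)
    (hdom : ∀ α β : A, α ∈ C → β ∈ C → τ α ≤ τ β → τt α ≤ τt β)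
    (m : ℕ) (hm : 1 ≤ m) (lam : ℕ → A) (hlam : ∀ i, i < m → lam i ∈ C)
    (hall : ∀ i, i + 1 < m → SCondA τt τ m lam i ∨ SCondB τt τ m lam i) :
    (∀ i, i + 1 < m → τ (highSum lam i m) < τ (lowSum lam i)) ∧
    (∀ i, i < m → τt (lam i) = τt (∑ j ∈ Finset.range m, lam j)) := by
  rcases eq_or_lt_of_le hm with hm1 | hm2
  · constructor
    · intro i hi; omega
    · intro i hi
      have : i = 0 := by omega
      subst this
      rw [← hm1]
      simp [Finset.sum_range_one]
  -- m ≥ 2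
  have lowC : ∀ i, i < m → lowSum lam i ∈ C := by
    intro i
    induction i with
    | zero => intro hi; rw [lowSum_zero']; exact hlam 0 (by omega)
    | succ k ih =>
      intro hk
      rw [lowSum_succ']
      exact hC _ _ (ih (by omega)) (hlam _ hk)
  have highC : ∀ i, i + 1 < m → highSum lam i m ∈ C := by
    have : ∀ d i, m - (i + 2) ≤ d → i + 1 < m → highSum lam i m ∈ C := by
      intro d
      induction d with
      | zero =>
        intro i hd hi
        rw [highSum_last' lam (by omega : i + 2 = m)]
        exact hlam _ hi
      | succ d ih =>
        intro i hd hi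
        by_cases h2 : i + 2 < m
        · rw [highSum_succ' lam hi]
          exact hC _ _ (hlam _ hi) (ih (i + 1) (by omega) h2)
        · rw [highSum_last' lam (by omega : i + 2 = m)]
          exact hlam _ hi
    exact fun i hi => this (m - (i + 2)) i le_rfl hi
  set S : A := ∑ j ∈ Finset.range m, lam j with hS
  have SC : S ∈ C := by
    have h := lowC (m - 1) (by omega)
    have e : lowSum lam (m - 1) = S := by
      unfold lowSum
      rw [hS, Nat.sub_add_cancel hm]
    rwa [e] at h
  have domlt : ∀ x y : A, x ∈ C → y ∈ C → τt x < τt y → τ x < τ y := by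
    intro x y hx hy h
    by_contra hle
    exact absurd (hdom y x hy hx (not_lt.1 hle)) (not_le.2 h)
  have hsplit : ∀ i, i + 1 < m →
      (τ (lowSum lam i) ≤ τ S ∧ τ S ≤ τ (highSum lam i m)) ∨
      (τ (highSum lam i m) ≤ τ S ∧ τ S ≤ τ (lowSum lam i)) := by
    intro i hi
    have h := hτ (lowSum lam i) (highSum lam i m) (lowC i (by omega)) (highC i hi)
    rwa [low_add_high' lam (by omega : i < m)] at h
  have hAband : ∀ i, i + 1 < m → SCondA τt τ m lam i →
      τ (highSum lam i m) ≤ τ S ∧ τ S ≤ τ (lowSum lam i) ∧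
      τt (highSum lam i m) ≤ τt S ∧ τt S ≤ τt (lowSum lam i) := by
    intro i hi hA
    rcases hsplit i hi with ⟨h1, h2⟩ | ⟨h1, h2⟩
    · exact absurd (h1.trans h2) (not_le.2 hA.2)
    · exact ⟨h1, h2, hdom _ _ (highC i hi) SC h1, hdom _ _ SC (lowC i (by omega)) h2⟩
  have hBband : ∀ i, i + 1 < m → SCondB τt τ m lam i →
      τ (lowSum lam i) ≤ τ S ∧ τ S ≤ τ (highSum lam i m) ∧
      τt (lowSum lam i) ≤ τt S ∧ τt S ≤ τt (highSum lam i m) := by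
    intro i hi hB
    have h12 : τ (lowSum lam i) ≤ τ S ∧ τ S ≤ τ (highSum lam i m) := by
      rcases hsplit i hi with ⟨h1, h2⟩ | ⟨h1, h2⟩
      · exact ⟨h1, h2⟩
      · exact ⟨hB.2.trans h1, h2.trans hB.2⟩
    exact ⟨h12.1, h12.2, hdom _ _ (lowC i (by omega)) SC h12.1,
      hdom _ _ SC (highC i hi) h12.2⟩
  -- R : forward propagation for Claim 1
  have R : ∀ d j, m - j ≤ d → j + 1 < m → τt (lowSum lam j) < τt S →
      τt (lam (j + 1)) < τt S → False := by
    intro d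
    induction d with
    | zero => intro j hd hj _ _; omega
    | succ d ih =>
      intro j hd hj hL ha
      rcases hall j hj with hA | hB
      · exact absurd (hAband j hj hA).2.2.2 (not_le.2 hL)
      · by_cases hj2 : j + 2 < m
        · have hLl : τt (lowSum lam (j + 1)) < τt S := by
            rcases hτt (lowSum lam j) (lam (j + 1)) (lowC j (by omega)) (hlam _ hj) with
              ⟨h1, h2⟩ | ⟨h1, h2⟩ <;> rw [← lowSum_succ'] at h1 h2
            · exact lt_of_le_of_lt h2 ha
            · exact lt_of_le_of_lt h2 hL
          rcases hall (j + 1) hj2 with hA' | hB'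
          · exact absurd (hAband (j + 1) hj2 hA').2.2.2 (not_le.2 hLl)
          · exact ih (j + 1) (by omega) hj2 hLl (lt_trans hB'.1 ha)
        · have hHj := (hBband j hj hB).2.2.2
          rw [highSum_last' lam (by omega : j + 2 = m)] at hHj
          exact absurd hHj (not_le.2 ha)
  -- Claim 1
  have claim1 : ∀ i, i + 1 < m → τt S ≤ τt (lowSum lam i) := by
    intro i
    induction i with
    | zero =>
      intro hi
      by_contra hlt
      push_neg at hlt
      rcases hall 0 hi with hA | hB
      · exact absurd (hAband 0 hi hA).2.2.2 (not_le.2 hlt)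
      · have h0 : τt (lam 0) < τt S := by rwa [lowSum_zero'] at hlt
        exact R m 0 (by omega) hi hlt (lt_trans hB.1 h0)
    | succ k ih =>
      intro hk
      by_contra hlt
      push_neg at hlt
      have hLk : τt S ≤ τt (lowSum lam k) := ih (by omega)
      have hak : τt (lam (k + 1)) < τt S := by
        rcases hτt (lowSum lam k) (lam (k + 1)) (lowC k (by omega)) (hlam _ (by omega)) with
          ⟨h1, h2⟩ | ⟨h1, h2⟩ <;> rw [← lowSum_succ'] at h1 h2
        · exact absurd (hLk.trans h1) (not_le.2 hlt)
        · exact lt_of_le_of_lt h1 hlt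
      rcases hall (k + 1) hk with hA | hB
      · exact absurd (hAband (k + 1) hk hA).2.2.2 (not_le.2 hlt)
      · exact R m (k + 1) (by omega) hk hlt (lt_trans hB.1 hak)
  -- R' : backward propagation for Claim 2
  have R' : ∀ j, j + 1 < m → τt S < τt (highSum lam j m) → τt S < τt (lam j) → False := by
    intro j
    induction j with
    | zero =>
      intro hj hH ha
      rcases hall 0 hj with hA | hB
      · exact absurd (hAband 0 hj hA).2.2.1 (not_le.2 hH)
      · have h0 := (hBband 0 hj hB).2.2.1
        rw [lowSum_zero'] at h0
        exact absurd h0 (not_le.2 ha)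
    | succ j ih =>
      intro hj hH ha
      have hjm : j + 1 < m := by omega
      have hHj : τt S < τt (highSum lam j m) := by
        rcases hτt (lam (j + 1)) (highSum lam (j + 1) m) (hlam _ hjm) (highC _ hj) with
          ⟨h1, h2⟩ | ⟨h1, h2⟩ <;> rw [← highSum_succ' lam hjm] at h1 h2
        · exact lt_of_lt_of_le ha h1
        · exact lt_of_lt_of_le hH h1
      have haj : τt S < τt (lam j) := by
        rcases hall j hjm with hA | hB
        · exact absurd (hAband j hjm hA).2.2.1 (not_le.2 hHj)
        · exact lt_trans ha hB.1
      exact ih hjm hHj haj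
  -- Claim 2
  have claim2 : ∀ i, i + 1 < m → τt (highSum lam i m) ≤ τt S := by
    have key2 : ∀ d i, m - i ≤ d → i + 1 < m → τt (highSum lam i m) ≤ τt S := by
      intro d
      induction d with
      | zero => intro i hd hi; omega
      | succ d ih =>
        intro i hd hi
        by_contra hlt
        push_neg at hlt
        have hai1 : τt S < τt (lam (i + 1)) := by
          by_cases h2 : i + 2 < m
          · have hH1 := ih (i + 1) (by omega) h2
            rcases hτt (lam (i + 1)) (highSum lam (i + 1) m) (hlam _ hi) (highC _ h2) with
              ⟨h1, h2'⟩ | ⟨h1, h2'⟩ <;> rw [← highSum_succ' lam hi] at h1 h2'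
            · exact absurd (h2'.trans hH1) (not_le.2 hlt)
            · exact lt_of_lt_of_le hlt h2'
          · have e : highSum lam i m = lam (i + 1) := highSum_last' lam (by omega)
            rwa [e] at hlt
        have hai : τt S < τt (lam i) := by
          rcases hall i hi with hA | hB
          · exact absurd (hAband i hi hA).2.2.1 (not_le.2 hlt)
          · exact lt_trans hai1 hB.1
        exact R' i hi hlt hai
    exact fun i hi => key2 (m - i) i le_rfl hi
  -- Y : helper for Claim 3
  have Y : ∀ k, k + 1 < m → τt S < τt (lam k) → SCondB τt τ m lam k → False := by
    intro k
    induction k with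
    | zero =>
      intro hk ha hB
      have h0 := (hBband 0 hk hB).2.2.1
      rw [lowSum_zero'] at h0
      exact absurd h0 (not_le.2 ha)
    | succ k ih =>
      intro hk ha hB
      have hkm : k + 1 < m := by omega
      have hBb := hBband (k + 1) hk hB
      have hta : τ S < τ (lam (k + 1)) := domlt S (lam (k + 1)) SC (hlam _ hkm) ha
      have hlk : τ (lowSum lam k) ≤ τ S := by
        rcases hτ (lowSum lam k) (lam (k + 1)) (lowC k (by omega)) (hlam _ hkm) with
          ⟨h1, h2⟩ | ⟨h1, h2⟩ <;> rw [← lowSum_succ'] at h1 h2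
        · exact h1.trans hBb.1
        · exact absurd (h1.trans hBb.1) (not_le.2 hta)
      rcases hall k hkm with hA | hB'
      · have hhk : τ S ≤ τ (highSum lam k m) := by
          rcases hτ (lam (k + 1)) (highSum lam (k + 1) m) (hlam _ hkm) (highC _ hk) with
            ⟨h1, h2⟩ | ⟨h1, h2⟩ <;> rw [← highSum_succ' lam hkm] at h1 h2
          · exact (le_of_lt hta).trans h1
          · exact hBb.2.1.trans h1
        exact absurd (lt_of_lt_of_le hA.2 (hlk.trans hhk)) (lt_irrefl _)
      · exact ih hkm (lt_trans ha hB'.1) hB'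
  -- Claim 3
  have claim3 : ∀ k, k < m → τt (lam k) ≤ τt S := by
    have key3 : ∀ d k, m - k ≤ d → k < m → τt (lam k) ≤ τt S := by
      intro d
      induction d with
      | zero => intro k hd hk; omega
      | succ d ih =>
        intro k hd hk
        by_contra hlt
        push_neg at hlt
        by_cases hk1 : k + 1 < m
        · rcases hall k hk1 with hA | hB
          · exact absurd (lt_of_lt_of_le hlt hA.1) (not_lt.2 (ih (k + 1) (by omega) hk1))
          · exact Y k hk1 hlt hB
        · have h2 := claim2 (m - 2) (by omega)
          rw [highSum_last' lam (by omega : m - 2 + 2 = m)] at h2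
          have e : m - 2 + 1 = k := by omega
          rw [e] at h2
          exact absurd h2 (not_le.2 hlt)
    exact fun k hk => key3 (m - k) k le_rfl hk
  -- Y' : helper for Claim 4
  have Y' : ∀ d j, m - j ≤ d → j + 1 < m → τt (lam (j + 1)) < τt S →
      SCondB τt τ m lam j → False := by
    intro d
    induction d with
    | zero => intro j hd hj _ _; omega
    | succ d ih =>
      intro j hd hj ha hB
      have hBb := hBband j hj hB
      by_cases hj2 : j + 2 < m
      · have hta : τ (lam (j + 1)) < τ S := domlt (lam (j + 1)) S (hlam _ hj) SC ha
        have hhk : τ S ≤ τ (highSum lam (j + 1) m) := by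
          rcases hτ (lam (j + 1)) (highSum lam (j + 1) m) (hlam _ hj) (highC _ hj2) with
            ⟨h1, h2⟩ | ⟨h1, h2⟩ <;> rw [← highSum_succ' lam hj] at h1 h2
          · exact hBb.2.1.trans h2
          · exact absurd (hBb.2.1.trans h2) (not_le.2 hta)
        rcases hall (j + 1) hj2 with hA | hB'
        · have hlk : τ (lowSum lam (j + 1)) ≤ τ S := by
            rcases hτ (lowSum lam j) (lam (j + 1)) (lowC j (by omega)) (hlam _ hj) with
              ⟨h1, h2⟩ | ⟨h1, h2⟩ <;> rw [← lowSum_succ'] at h1 h2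
            · exact h2.trans (le_of_lt hta)
            · exact h2.trans hBb.1
          exact absurd (lt_of_lt_of_le hA.2 (hlk.trans hhk)) (lt_irrefl _)
        · exact ih (j + 1) (by omega) hj2 (lt_trans hB'.1 ha) hB'
      · have hHj := hBb.2.2.2
        rw [highSum_last' lam (by omega : j + 2 = m)] at hHj
        exact absurd hHj (not_le.2 ha)
  -- Claim 4
  have claim4 : ∀ k, k < m → τt S ≤ τt (lam k) := by
    intro k
    induction k with
    | zero =>
      intro hk
      have h := claim1 0 (by omega)
      rwa [lowSum_zero'] at h
    | succ k ih =>
      intro hk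
      by_contra hlt
      push_neg at hlt
      have hkm : k + 1 < m := hk
      rcases hall k hkm with hA | hB
      · exact absurd (lt_of_le_of_lt hA.1 hlt) (not_lt.2 (ih (by omega)))
      · exact Y' (m - k) k le_rfl hkm hlt hB
  exact ⟨
    by
      intro i hi
      rcases hall i hi with hA | hB
      · exact hA.2
      · have e1 : τt (lam i) = τt S := le_antisymm (claim3 i (by omega)) (claim4 i (by omega))
        have e2 : τt (lam (i + 1)) = τt S :=
          le_antisymm (claim3 (i + 1) (by omega)) (claim4 (i + 1) (by omega))
        have := hB.1
        rw [e1, e2] at this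
        exact absurd this (lt_irrefl _),
    fun k hk => le_antisymm (claim3 k hk) (claim4 k hk)⟩

end StabAux

theorem stmt10 {A T T' : Type*} [AddCommGroup A] [LinearOrder T] [LinearOrder T']
    (C : Set A) (hC : ∀ a b : A, a ∈ C → b ∈ C → a + b ∈ C) (h0 : (0 : A) ∉ C)
    (τ : A → T) (τt : A → T') (hτ : WeakStability C τ) (hτt : WeakStability C τt)
    (hdom : ∀ α β : A, α ∈ C → β ∈ C → τ α ≤ τ β → τt α ≤ τt β)
    (m : ℕ) (hm : 1 ≤ m) (lam : ℕ → A) (hlam : ∀ i, i < m → lam i ∈ C) :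
    Scoeff τt τ m lam =
      if (∀ i, i + 1 < m → τ (highSum lam i m) < τ (lowSum lam i)) ∧
         (∀ i, i < m → τt (lam i) = τt (∑ j ∈ Finset.range m, lam j)) then
        (-1) ^ (m - 1)
      else 0 := by
  rcases Classical.em
      (∀ i ∈ Finset.range (m - 1), SCondA τt τ m lam i ∨ SCondB τt τ m lam i) with hall | hnall
  · have hall' : ∀ i, i + 1 < m → SCondA τt τ m lam i ∨ SCondB τt τ m lam i :=
      fun i hi => hall i (Finset.mem_range.2 (by omega))
    obtain ⟨h1, h2⟩ := auxKey C hC τ τt hτ hτt hdom m hm lam hlam hall'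
    have hA : ∀ i ∈ Finset.range (m - 1), SCondA τt τ m lam i := by
      intro i hi
      have hi' : i + 1 < m := by have := Finset.mem_range.1 hi; omega
      exact ⟨le_of_eq (by rw [h2 i (by omega), h2 (i + 1) (by omega)]), h1 i hi'⟩
    rw [Scoeff, if_pos hall, Finset.filter_true_of_mem hA, Finset.card_range, if_pos ⟨h1, h2⟩]
  · rw [Scoeff, if_neg hnall, if_neg]
    rintro ⟨h1, h2⟩
    refine hnall fun i hi => ?_
    have hi' : i + 1 < m := by have := Finset.mem_range.1 hi; omega
    exact Or.inl ⟨le_of_eq (by rw [h2 i (by omega), h2 (i + 1) (by omega)]), h1 i hi'⟩
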